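/- Let d ≥ 1 be an integer and r > 0. If X and Y are independent random points, each distributed according to the uniform probability measure σ on the sphere S_r^{d-1}, then for every t > 0, P(|‖X − Y‖² − 2r²| ≥ t) ≤ 4r⁴ / (d t²). In particular, for each fixed t > 0 this probability tends to 0 as d → ∞. -/

import Mathlib

open MeasureTheory Filter

section Aux

variable {d : ℕ}


lemma esq (x : EuclideanSpace ℝ (Fin d)) : ‖x‖^2 = ∑ j, (x j)^2 := by
  rw [PiLp.norm_sq_eq_of_L2]
  simp [Real.norm_eq_abs, sq_abs]

lemma coord_meas (i : Fin d) :
    Measurable (fun x : EuclideanSpace ℝ (Fin d) => x i) :=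
  (EuclideanSpace.proj (𝕜 := ℝ) i).continuous.measurable

lemma coord_sq_int (r : ℝ) (μ : Measure (EuclideanSpace ℝ (Fin d)))
    [IsProbabilityMeasure μ] (hs : ∀ᵐ x ∂μ, ‖x‖ = r) (i : Fin d) :
    Integrable (fun x => (x i)^2) μ := by
  refine Integrable.mono' (integrable_const (r^2)) ?_ ?_
  · exact ((coord_meas i).pow_const 2).aestronglyMeasurable
  · filter_upwards [hs] with x hx
    rw [Real.norm_eq_abs, abs_of_nonneg (sq_nonneg _)]
    have h1 : (x i)^2 ≤ ∑ j, (x j)^2 := by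
      exact Finset.single_le_sum (s := Finset.univ) (f := fun j => (x j)^2)
        (fun j _ => sq_nonneg _) (Finset.mem_univ i)
    rw [← esq, hx] at h1
    exact h1

lemma coord_sq (hd : 1 ≤ d) (r : ℝ) (μ : Measure (EuclideanSpace ℝ (Fin d)))
    [IsProbabilityMeasure μ]
    (hs : ∀ᵐ x ∂μ, ‖x‖ = r)
    (hinv : ∀ A : EuclideanSpace ℝ (Fin d) ≃ₗᵢ[ℝ] EuclideanSpace ℝ (Fin d),
      Measure.map A μ = μ) (i : Fin d) :
    ∫ x, (x i)^2 ∂μ = r^2 / d := by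
  have key : ∀ j : Fin d, ∫ x, (x j)^2 ∂μ = ∫ x, (x i)^2 ∂μ := by
    intro j
    set A := LinearIsometryEquiv.piLpCongrLeft 2 ℝ ℝ (Equiv.swap i j) with hA
    have hmap := hinv A
    have hAx : ∀ x : EuclideanSpace ℝ (Fin d), A x j = x i := by
      intro x
      rw [LinearIsometryEquiv.piLpCongrLeft_apply]
      show x (Equiv.symm (Equiv.swap i j) j) = x i
      rw [Equiv.symm_swap, Equiv.swap_apply_right]
    calc ∫ x, (x j)^2 ∂μ = ∫ x, (x j)^2 ∂(Measure.map A μ) := by rw [hmap]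
      _ = ∫ x, ((A x) j)^2 ∂μ := by
          rw [integral_map (A.continuous.measurable.aemeasurable)]
          exact ((coord_meas j).pow_const 2).aestronglyMeasurable
      _ = ∫ x, (x i)^2 ∂μ := by simp_rw [hAx]
  have hsum : ∑ j : Fin d, ∫ x, (x j)^2 ∂μ = r^2 := by
    rw [← integral_finset_sum _ (fun j _ => coord_sq_int r μ hs j)]
    have : ∫ x, ∑ j, (x j)^2 ∂μ = ∫ _x, r^2 ∂μ := by
      refine integral_congr_ae ?_
      filter_upwards [hs] with x hx
      rw [← hx, esq]
    rw [this, integral_const, probReal_univ, one_smul]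
  have : (d : ℝ) * ∫ x, (x i)^2 ∂μ = r^2 := by
    rw [← hsum, Finset.sum_congr rfl (fun j _ => key j)]
    simp [Finset.sum_const, mul_comm]
  have hd0 : (d : ℝ) ≠ 0 := by positivity
  field_simp at this ⊢
  linarith [this]

open scoped RealInnerProductSpace

lemma inner_sq (hd : 1 ≤ d) (r : ℝ) (μ : Measure (EuclideanSpace ℝ (Fin d)))
    [IsProbabilityMeasure μ]
    (hs : ∀ᵐ x ∂μ, ‖x‖ = r)
    (hinv : ∀ A : EuclideanSpace ℝ (Fin d) ≃ₗᵢ[ℝ] EuclideanSpace ℝ (Fin d),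
      Measure.map A μ = μ)
    (y : EuclideanSpace ℝ (Fin d)) (hy : ‖y‖ = r) :
    ∫ x, ⟪x, y⟫^2 ∂μ = r^4 / d := by
  have hr0 : 0 ≤ r := hy ▸ norm_nonneg y
  set i0 : Fin d := ⟨0, hd⟩
  set w : EuclideanSpace ℝ (Fin d) := r • EuclideanSpace.single i0 (1:ℝ) with hw
  have hwn : ‖y‖ = ‖w‖ := by
    rw [hy, hw, norm_smul, EuclideanSpace.norm_single]
    simp [abs_of_nonneg hr0]
  set A := Submodule.reflection (ℝ ∙ (y - w))ᗮ with hA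
  have hAy : A y = w := Submodule.reflection_sub hwn
  have hinner : ∀ x : EuclideanSpace ℝ (Fin d), ⟪x, w⟫ = r * x i0 := by
    intro x
    rw [hw, real_inner_smul_right]
    have : ⟪x, EuclideanSpace.single i0 (1:ℝ)⟫ = x i0 := by
      rw [EuclideanSpace.inner_single_right]; simp
    rw [this]
  have hmeas : Measurable fun x : EuclideanSpace ℝ (Fin d) => ⟪x, w⟫^2 := by
    have : Continuous fun x : EuclideanSpace ℝ (Fin d) => ⟪x, w⟫ :=
      continuous_id.inner continuous_const
    exact (this.pow 2).measurable
  calc ∫ x, ⟪x, y⟫^2 ∂μ = ∫ x, ⟪A x, A y⟫^2 ∂μ := by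
        simp_rw [A.inner_map_map]
    _ = ∫ x, ⟪A x, w⟫^2 ∂μ := by rw [hAy]
    _ = ∫ x, ⟪x, w⟫^2 ∂(Measure.map A μ) := by
        rw [integral_map A.continuous.measurable.aemeasurable
          ((hinv A) ▸ hmeas.aestronglyMeasurable)]
    _ = ∫ x, ⟪x, w⟫^2 ∂μ := by rw [hinv A]
    _ = ∫ x, r^2 * (x i0)^2 ∂μ := by
        refine integral_congr_ae (Eventually.of_forall fun x => ?_)
        show ⟪x, w⟫^2 = r^2 * (x i0)^2
        rw [hinner x]; ring
    _ = r^4 / d := by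
        rw [integral_const_mul, coord_sq hd r μ hs hinv i0]
        ring

lemma prod_ae_sphere (r : ℝ) (μ : Measure (EuclideanSpace ℝ (Fin d)))
    [IsProbabilityMeasure μ] (hs : ∀ᵐ x ∂μ, ‖x‖ = r) :
    ∀ᵐ p ∂(μ.prod μ), ‖p.1‖ = r ∧ ‖p.2‖ = r := by
  rw [ae_iff] at hs ⊢
  have hsub : {p : EuclideanSpace ℝ (Fin d) × EuclideanSpace ℝ (Fin d) |
      ¬(‖p.1‖ = r ∧ ‖p.2‖ = r)} ⊆
      ({x | ¬‖x‖ = r} ×ˢ Set.univ) ∪ (Set.univ ×ˢ {x | ¬‖x‖ = r}) := by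
    intro p hp
    rw [Set.mem_setOf_eq, not_and_or] at hp
    rcases hp with h | h
    · exact Or.inl ⟨h, Set.mem_univ _⟩
    · exact Or.inr ⟨Set.mem_univ _, h⟩
  refine measure_mono_null hsub (le_antisymm ?_ zero_le)
  refine le_trans (measure_union_le _ _) ?_
  rw [Measure.prod_prod, Measure.prod_prod, hs]
  simp

lemma inner_sq_prod (hd : 1 ≤ d) (r : ℝ) (μ : Measure (EuclideanSpace ℝ (Fin d)))
    [IsProbabilityMeasure μ]
    (hs : ∀ᵐ x ∂μ, ‖x‖ = r)
    (hinv : ∀ A : EuclideanSpace ℝ (Fin d) ≃ₗᵢ[ℝ] EuclideanSpace ℝ (Fin d),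
      Measure.map A μ = μ) :
    Integrable (fun p : EuclideanSpace ℝ (Fin d) × EuclideanSpace ℝ (Fin d) =>
        ⟪p.1, p.2⟫^2) (μ.prod μ) ∧
    ∫ p : EuclideanSpace ℝ (Fin d) × EuclideanSpace ℝ (Fin d),
        ⟪p.1, p.2⟫^2 ∂(μ.prod μ) = r^4 / d := by
  have hcont : Continuous (fun p : EuclideanSpace ℝ (Fin d) × EuclideanSpace ℝ (Fin d) =>
      ⟪p.1, p.2⟫^2) := (continuous_fst.inner continuous_snd).pow 2
  have hint : Integrable (fun p : EuclideanSpace ℝ (Fin d) × EuclideanSpace ℝ (Fin d) =>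
      ⟪p.1, p.2⟫^2) (μ.prod μ) := by
    refine Integrable.mono' (integrable_const (r^4)) hcont.measurable.aestronglyMeasurable ?_
    filter_upwards [prod_ae_sphere r μ hs] with p hp
    rw [Real.norm_eq_abs, abs_of_nonneg (sq_nonneg _)]
    have h1 : |⟪p.1, p.2⟫| ≤ ‖p.1‖ * ‖p.2‖ := abs_real_inner_le_norm _ _
    calc ⟪p.1, p.2⟫^2 = |⟪p.1, p.2⟫|^2 := (sq_abs _).symm
      _ ≤ (‖p.1‖ * ‖p.2‖)^2 := by
          exact pow_le_pow_left₀ (abs_nonneg _) h1 2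
      _ = r^4 := by rw [hp.1, hp.2]; ring
  refine ⟨hint, ?_⟩
  rw [MeasureTheory.integral_prod _ hint]
  have : ∫ x, (∫ y, ⟪x, y⟫^2 ∂μ) ∂μ = ∫ _x, r^4/d ∂μ := by
    refine integral_congr_ae ?_
    filter_upwards [hs] with x hx
    have : ∀ y : EuclideanSpace ℝ (Fin d), ⟪x, y⟫^2 = ⟪y, x⟫^2 := by
      intro y; rw [real_inner_comm]
    simp_rw [this]
    exact inner_sq hd r μ hs hinv x hx
  rw [this, integral_const, probReal_univ, one_smul]

set_option maxHeartbeats 1000000 in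
lemma main_bound (hd : 1 ≤ d) (r t : ℝ) (ht : 0 < t)
    (μ : Measure (EuclideanSpace ℝ (Fin d))) [IsProbabilityMeasure μ]
    (hs : ∀ᵐ x ∂μ, ‖x‖ = r)
    (hinv : ∀ A : EuclideanSpace ℝ (Fin d) ≃ₗᵢ[ℝ] EuclideanSpace ℝ (Fin d),
      Measure.map A μ = μ) :
    (μ.prod μ) {p : EuclideanSpace ℝ (Fin d) × EuclideanSpace ℝ (Fin d) |
        t ≤ |‖p.1 - p.2‖ ^ 2 - 2 * r ^ 2|}
      ≤ ENNReal.ofReal (4 * r ^ 4 / (d * t ^ 2)) := by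
  obtain ⟨hint, hI⟩ := inner_sq_prod hd r μ hs hinv
  set ν := μ.prod μ with hν
  set T := {p : EuclideanSpace ℝ (Fin d) × EuclideanSpace ℝ (Fin d) |
    t^2/4 ≤ ⟪p.1, p.2⟫^2} with hT
  have hST : ν {p : EuclideanSpace ℝ (Fin d) × EuclideanSpace ℝ (Fin d) |
      t ≤ |‖p.1 - p.2‖ ^ 2 - 2 * r ^ 2|} ≤ ν T := by
    refine measure_mono_ae ?_
    filter_upwards [prod_ae_sphere r μ hs] with p hp hpS
    have hpS' : t ≤ |‖p.1 - p.2‖ ^ 2 - 2 * r ^ 2| := hpS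
    show t^2/4 ≤ ⟪p.1, p.2⟫^2
    have hns : ‖p.1 - p.2‖^2 = ‖p.1‖^2 - 2*⟪p.1, p.2⟫ + ‖p.2‖^2 :=
      norm_sub_sq_real p.1 p.2
    rw [hp.1, hp.2] at hns
    have habs : |‖p.1 - p.2‖ ^ 2 - 2 * r ^ 2| = 2 * |⟪p.1, p.2⟫| := by
      rw [hns]
      rw [show r^2 - 2*⟪p.1, p.2⟫ + r^2 - 2*r^2 = -(2*⟪p.1, p.2⟫) by ring]
      rw [abs_neg, abs_mul]
      norm_num
    rw [habs] at hpS'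
    nlinarith [sq_abs ⟪p.1, p.2⟫, abs_nonneg ⟪p.1, p.2⟫]
  have markov := mul_meas_ge_le_integral_of_nonneg
    (Eventually.of_forall fun p : EuclideanSpace ℝ (Fin d) × EuclideanSpace ℝ (Fin d) =>
      sq_nonneg ⟪p.1, p.2⟫) hint (t^2/4)
  rw [hI] at markov
  have ht4 : (0:ℝ) < t^2/4 := by positivity
  have hd0 : (0:ℝ) < d := by exact_mod_cast Nat.lt_of_lt_of_le Nat.zero_lt_one hd
  have hTR : (ν T).toReal ≤ 4 * r ^ 4 / (d * t ^ 2) := by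
    calc (ν T).toReal ≤ (r^4/d) / (t^2/4) := by
          rw [le_div_iff₀ ht4, mul_comm]
          exact markov
      _ = 4 * r ^ 4 / (d * t ^ 2) := by
          rw [div_div_div_eq]
          ring_nf
  have hTne : ν T ≠ ⊤ := measure_ne_top ν T
  refine le_trans hST ?_
  calc ν T = ENNReal.ofReal ((ν T).toReal) := (ENNReal.ofReal_toReal hTne).symm
    _ ≤ ENNReal.ofReal (4 * r ^ 4 / (d * t ^ 2)) := ENNReal.ofReal_le_ofReal hTR

end Aux

/-- For each `d ≥ 1` and `r > 0`, let `σ d` be the uniform probability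
measure on the sphere `S_r^{d-1} ⊂ ℝ^d` (formalized as: a rotation-invariant probability
measure concentrated on the sphere — these properties characterize it uniquely). If `X` and
`Y` are independent, each with law `σ d` (so that the joint law is `σ d × σ d`), then for
every `t > 0`, `P(|‖X − Y‖² − 2r²| ≥ t) ≤ 4r⁴ / (d t²)`; in particular, for each fixed
`t > 0` this probability tends to `0` as `d → ∞`. -/
theorem sphere_uniform_sq_distance_concentration (r : ℝ) (hr : 0 < r)
    (σ : ∀ d : ℕ, Measure (EuclideanSpace ℝ (Fin d)))
    (hprob : ∀ d, 1 ≤ d → IsProbabilityMeasure (σ d))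
    (hsupp : ∀ d, 1 ≤ d → σ d (Metric.sphere (0 : EuclideanSpace ℝ (Fin d)) r)ᶜ = 0)
    (hinv : ∀ d, 1 ≤ d → ∀ A : EuclideanSpace ℝ (Fin d) ≃ₗᵢ[ℝ] EuclideanSpace ℝ (Fin d),
      Measure.map A (σ d) = σ d) :
    (∀ d, 1 ≤ d → ∀ t : ℝ, 0 < t →
        ((σ d).prod (σ d))
            {p : EuclideanSpace ℝ (Fin d) × EuclideanSpace ℝ (Fin d) |
              t ≤ |‖p.1 - p.2‖ ^ 2 - 2 * r ^ 2|}
          ≤ ENNReal.ofReal (4 * r ^ 4 / (d * t ^ 2))) ∧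
      ∀ t : ℝ, 0 < t →
        Tendsto
          (fun d : ℕ =>
            ((σ d).prod (σ d))
              {p : EuclideanSpace ℝ (Fin d) × EuclideanSpace ℝ (Fin d) |
                t ≤ |‖p.1 - p.2‖ ^ 2 - 2 * r ^ 2|})
          atTop (nhds 0) := by
  have part1 : ∀ d, 1 ≤ d → ∀ t : ℝ, 0 < t →
      ((σ d).prod (σ d))
          {p : EuclideanSpace ℝ (Fin d) × EuclideanSpace ℝ (Fin d) |
            t ≤ |‖p.1 - p.2‖ ^ 2 - 2 * r ^ 2|}
        ≤ ENNReal.ofReal (4 * r ^ 4 / (d * t ^ 2)) := by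
    intro d hd t ht
    haveI := hprob d hd
    have hs : ∀ᵐ x ∂(σ d), ‖x‖ = r := by
      rw [ae_iff]
      have hset : {x : EuclideanSpace ℝ (Fin d) | ¬‖x‖ = r} =
          (Metric.sphere (0 : EuclideanSpace ℝ (Fin d)) r)ᶜ := by
        ext x
        simp [mem_sphere_zero_iff_norm]
      rw [hset]
      exact hsupp d hd
    exact main_bound hd r t ht (σ d) hs (hinv d hd)
  refine ⟨part1, fun t ht => ?_⟩
  have hb : Tendsto (fun d : ℕ => ENNReal.ofReal (4 * r ^ 4 / (d * t ^ 2)))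
      atTop (nhds 0) := by
    have hreal : Tendsto (fun d : ℕ => 4 * r ^ 4 / (d * t ^ 2)) atTop (nhds 0) := by
      have heq : (fun d : ℕ => 4 * r ^ 4 / (d * t ^ 2))
          = fun d : ℕ => (4 * r ^ 4 / t ^ 2) / d := by
        funext d
        rw [div_div, mul_comm (t^2) (d:ℝ)]
      rw [heq]
      exact tendsto_const_div_atTop_nhds_zero_nat _
    have := ENNReal.tendsto_ofReal hreal
    simpa using this
  refine tendsto_of_tendsto_of_tendsto_of_le_of_le' tendsto_const_nhds hb ?_ ?_
  · exact Eventually.of_forall fun d => zero_le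
  · filter_upwards [eventually_ge_atTop 1] with d hd
    exact part1 d hd t ht
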